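/- Let k be a field, n a natural number, and Δ a simplicial complex on Fin n (a set of finsets of Fin n closed under taking subsets). Let I_Δ be the Stanley-Reisner ideal of Δ, i.e. the ideal of MvPolynomial (Fin n) k generated by {mon N : N ∉ Δ}. Then for every finset F of Fin n, F ∈ Δ if and only if mon F ∉ I_Δ. (The Stanley-Reisner complex of the Stanley-Reisner ideal of Δ is Δ itself.) -/

import Mathlib

/-- The squarefree monomial `∏ i ∈ F, X i` associated to a finset `F` of `Fin n`. -/
noncomputable def mon (k : Type*) [Field k] (n : ℕ) (F : Finset (Fin n)) :
    MvPolynomial (Fin n) k :=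
  ∏ i ∈ F, MvPolynomial.X i

open MvPolynomial Finsupp in
private noncomputable def expF {n : ℕ} (F : Finset (Fin n)) : Fin n →₀ ℕ :=
  ∑ i ∈ F, Finsupp.single i 1

private lemma expF_apply {n : ℕ} (F : Finset (Fin n)) (i : Fin n) :
    expF F i = if i ∈ F then 1 else 0 := by
  classical
  simp [expF, Finsupp.finset_sum_apply, Finsupp.single_apply, Finset.sum_ite_eq']

private lemma expF_le_iff {n : ℕ} {N F : Finset (Fin n)} :
    expF N ≤ expF F ↔ N ⊆ F := by
  constructor
  · intro h i hi
    have := h i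
    simp [expF_apply, hi] at this
    by_contra hf
    simp [hf] at this
  · intro h i
    simp only [expF_apply]
    by_cases hi : i ∈ N
    · simp [hi, h hi]
    · simp [hi]

private lemma mon_eq_monomial (k : Type*) [Field k] (n : ℕ) (F : Finset (Fin n)) :
    mon k n F = MvPolynomial.monomial (expF F) (1 : k) := by
  classical
  rw [mon, expF]
  induction F using Finset.induction with
  | empty => simp
  | insert a s h ih =>
    rw [Finset.prod_insert h, Finset.sum_insert h, ih, MvPolynomial.X,
      MvPolynomial.monomial_mul, one_mul]

theorem mem_complex_iff_mon_not_mem_stanleyReisner_ideal (k : Type*) [Field k] (n : ℕ)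
    (Δ : Set (Finset (Fin n))) (hΔ : ∀ A ∈ Δ, ∀ B ⊆ A, B ∈ Δ)
    (F : Finset (Fin n)) :
    F ∈ Δ ↔ mon k n F ∉ Ideal.span (mon k n '' {N | N ∉ Δ}) := by
  classical
  have himg : mon k n '' {N | N ∉ Δ}
      = (fun s => MvPolynomial.monomial s (1 : k)) '' (expF '' {N | N ∉ Δ}) := by
    rw [Set.image_image]
    exact Set.image_congr fun N _ => mon_eq_monomial k n N
  have hmem : mon k n F ∈ Ideal.span (mon k n '' {N | N ∉ Δ}) ↔ ∃ N ∉ Δ, N ⊆ F := by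
    rw [himg, MvPolynomial.mem_ideal_span_monomial_image]
    rw [mon_eq_monomial]
    rw [MvPolynomial.support_monomial, if_neg (one_ne_zero)]
    constructor
    · intro h
      obtain ⟨si, hsi, hle⟩ := h (expF F) (by simp)
      obtain ⟨N, hN, rfl⟩ := hsi
      exact ⟨N, hN, expF_le_iff.mp hle⟩
    · rintro ⟨N, hN, hsub⟩ xi hxi
      simp only [Finset.mem_singleton] at hxi
      subst hxi
      exact ⟨expF N, ⟨N, hN, rfl⟩, expF_le_iff.mpr hsub⟩
  rw [hmem]
  constructor
  · intro hF h
    obtain ⟨N, hN, hsub⟩ := h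
    exact hN (hΔ F hF N hsub)
  · intro h
    by_contra hF
    exact h ⟨F, hF, subset_rfl⟩
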